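/- Let h ≥ 2 and s ≥ 1, set d := k + s − 1 and m := s + h − 1, assume h + d ≤ n, and let λ : {1,…,n} × {0,…,s−1} → F be injective. Fix distinct u, i ∈ {1,…,h}. If c and c' are codewords of C(n,k,s,m,λ) such that (a) c(u,b,a) = c'(u,b,a) for every b ∈ {1,…,s−1} and every a ∈ {0,…,s−1}^n, and (b) ∑_{j=0}^{s−2} c(u, j+1, a(i, a_i⊕j)) + c(u, s+i−1, a(i, a_i⊕(s−1))) = ∑_{j=0}^{s−2} c'(u, j+1, a(i, a_i⊕j)) + c'(u, s+i−1, a(i, a_i⊕(s−1))) for every a ∈ {0,…,s−1}^n, then c(u, s+i−1, a) = c'(u, s+i−1, a) for every a ∈ {0,…,s−1}^n. -/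

import Mathlib

/-- The code `C(n,k,s,m,λ)`: an array `c : {1,…,n} × {1,…,m} × {0,…,s-1}^n → F`
(node index `i : Fin n`, block index `b ∈ {1,…,m}` as a natural number,
`a : Fin n → Fin s`) satisfying the parity-check equations
`∑_{i=1}^n λ(i,a_i)^t · c(i,b,a) = 0` for all `t ∈ {0,…,n-k-1}`,
`b ∈ {1,…,m}` and `a ∈ {0,…,s-1}^n`. -/
def IsCodeword {F : Type*} [Field F] {n : ℕ} (k s m : ℕ)
    (lam : Fin n → Fin s → F) (c : Fin n → ℕ → (Fin n → Fin s) → F) : Prop :=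
  ∀ t < n - k, ∀ b ∈ Finset.Icc 1 m, ∀ a : Fin n → Fin s,
    ∑ i, lam i (a i) ^ t * c i b a = 0

open Fin.NatCast in
/-- The sum `∑_{j=0}^{s-2} c(i, j+1, a(w, a_w ⊕ j)) + c(i, bLast, a(w, a_w ⊕ (s-1)))`,
where `w` is the failed node whose digit is rotated, `bLast` the distinguished
block index and `⊕` is addition modulo `s` (`Fin s` addition). -/
def repairSum {F : Type*} [Field F] {n s : ℕ} [NeZero s]
    (c : Fin n → ℕ → (Fin n → Fin s) → F) (w : Fin n) (bLast : ℕ)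
    (i : Fin n) (a : Fin n → Fin s) : F :=
  ∑ j ∈ Finset.range (s - 1), c i (j + 1) (Function.update a w (a w + (j : Fin s)))
    + c i bLast (Function.update a w (a w + ((s - 1 : ℕ) : Fin s)))

/-- second-round recovery in `C(n,k,s,m,λ)`, with `h ≥ 2`,
`s ≥ 1`, `d := k+s-1`, `m := s+h-1`, `h + d ≤ n`.  The distinct failed nodes
`u, i : Fin n` satisfy `(u : ℕ) < h` and `(i : ℕ) < h` (0-indexed versions of
`u, i ∈ {1,…,h}`), so the paper's block index `s+i-1` is `s + (i : ℕ)` here.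
If two codewords agree at node `u` on blocks `b ∈ {1,…,s-1}` and the exchanged
sums `∑_{j=0}^{s-2} c(u,j+1,a(i,a_i⊕j)) + c(u,s+i-1,a(i,a_i⊕(s-1)))` agree,
then they agree at node `u` on block `s+i-1`. -/
theorem stmt_12 {F : Type*} [Field F] (n k h s : ℕ) [NeZero s]
    (hk : 1 ≤ k) (hh : 2 ≤ h) (hn : h + (k + s - 1) ≤ n)
    (lam : Fin n → Fin s → F)
    (hlam : Function.Injective fun p : Fin n × Fin s => lam p.1 p.2)
    (u i : Fin n) (hu : (u : ℕ) < h) (hi : (i : ℕ) < h) (hui : u ≠ i)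
    (c c' : Fin n → ℕ → (Fin n → Fin s) → F)
    (hc : IsCodeword k s (s + h - 1) lam c) (hc' : IsCodeword k s (s + h - 1) lam c')
    (ha : ∀ b ∈ Finset.Icc 1 (s - 1), ∀ a : Fin n → Fin s, c u b a = c' u b a)
    (hb : ∀ a : Fin n → Fin s,
      repairSum c i (s + (i : ℕ)) u a = repairSum c' i (s + (i : ℕ)) u a) :
    ∀ a : Fin n → Fin s, c u (s + (i : ℕ)) a = c' u (s + (i : ℕ)) a := by
  intro a
  have key := hb (Function.update a i (a i - (open Fin.NatCast in ((s - 1 : ℕ) : Fin s))))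
  unfold repairSum at key
  rw [Finset.sum_congr rfl (fun j hj => ha (j + 1)
    (Finset.mem_Icc.mpr ⟨Nat.le_add_left 1 j, Finset.mem_range.mp hj⟩) _)] at key
  have key2 := add_left_cancel key
  simpa [Function.update_idem, sub_add_cancel, Function.update_eq_self] using key2
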